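/- Let (X, τ) be a compact topological space, (Y, d) a pseudometric space, and F a family of continuous maps f : X → Y which is bounded in the sense that sup_{f ∈ F} diam_d(f(X)) < ∞. Then the following are equivalent: (1) F is a fragmented family on X; (2) every countable subfamily K ⊆ F is a fragmented family on X; (3) for every countable subfamily K ⊆ F the pseudometric space (X, ρ_{K,d}) is separable, where ρ_{K,d}(x₁, x₂) := sup_{f ∈ K} d(f(x₁), f(x₂)). -/

import Mathlib

/-- A family `F` of maps from a topological space `X` to a pseudometric space `Y`
is a *fragmented family* if for every nonempty `A ⊆ X` and every `ε > 0` there is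
an open `O ⊆ X` with `O ∩ A ≠ ∅` such that `f (O ∩ A)` is `ε`-small for all `f ∈ F`. -/
def IsFragmentedFamily {X Y : Type*} [TopologicalSpace X] [PseudoMetricSpace Y]
    (F : Set (X → Y)) : Prop :=
  ∀ A : Set X, A.Nonempty → ∀ ε : ℝ, 0 < ε → ∃ O : Set X, IsOpen O ∧ (O ∩ A).Nonempty ∧
    ∀ f ∈ F, ∀ x ∈ O ∩ A, ∀ y ∈ O ∩ A, dist (f x) (f y) ≤ ε

set_option linter.unusedSectionVars false

open Set Metric Filter Function

section Aux

variable {X Y : Type*} [TopologicalSpace X] [PseudoMetricSpace Y]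

private lemma min_one_subadd {a b c : ℝ} (ha : 0 ≤ a) (hb : 0 ≤ b) (h : c ≤ a + b) :
    min 1 c ≤ min 1 a + min 1 b := by
  rcases le_or_gt 1 a with h1 | h1
  · have := min_le_left 1 c
    have hb0 : 0 ≤ min 1 b := le_min zero_le_one hb
    rw [min_eq_left h1]
    linarith
  · rcases le_or_gt 1 b with h2 | h2
    · have := min_le_left 1 c
      have ha0 : 0 ≤ min 1 a := le_min zero_le_one ha
      rw [min_eq_left h2]
      linarith
    · rw [min_eq_right h1.le, min_eq_right h2.le]
      exact le_trans (min_le_right 1 c) h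
end Aux

section DStar

variable {X Y : Type*} [TopologicalSpace X] [PseudoMetricSpace Y]

private noncomputable def dstar (g : ℕ → X → Y) (x y : X) : ℝ :=
  ∑' n, (1/2 : ℝ) ^ n * min 1 (dist (g n x) (g n y))

private lemma dstar_term_nonneg (g : ℕ → X → Y) (x y : X) (n : ℕ) :
    0 ≤ (1/2 : ℝ) ^ n * min 1 (dist (g n x) (g n y)) :=
  mul_nonneg (by positivity) (le_min zero_le_one dist_nonneg)

private lemma dstar_term_le (g : ℕ → X → Y) (x y : X) (n : ℕ) :
    (1/2 : ℝ) ^ n * min 1 (dist (g n x) (g n y)) ≤ (1/2 : ℝ) ^ n := by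
  nth_rewrite 2 [show ((1:ℝ)/2) ^ n = (1/2:ℝ)^n * 1 by ring]
  exact mul_le_mul_of_nonneg_left (min_le_left _ _) (by positivity)

private lemma dstar_summable (g : ℕ → X → Y) (x y : X) :
    Summable (fun n => (1/2 : ℝ) ^ n * min 1 (dist (g n x) (g n y))) :=
  Summable.of_nonneg_of_le (dstar_term_nonneg g x y) (dstar_term_le g x y)
    summable_geometric_two

private lemma dstar_nonneg (g : ℕ → X → Y) (x y : X) : 0 ≤ dstar g x y :=
  tsum_nonneg (dstar_term_nonneg g x y)

private lemma dstar_self (g : ℕ → X → Y) (x : X) : dstar g x x = 0 := by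
  simp [dstar, dist_self]

private lemma dstar_comm (g : ℕ → X → Y) (x y : X) : dstar g x y = dstar g y x := by
  simp only [dstar, dist_comm]

private lemma dstar_triangle (g : ℕ → X → Y) (x y z : X) :
    dstar g x z ≤ dstar g x y + dstar g y z := by
  rw [dstar, dstar, dstar, ← Summable.tsum_add (dstar_summable g x y) (dstar_summable g y z)]
  refine Summable.tsum_le_tsum (fun n => ?_) (dstar_summable g x z)
    ((dstar_summable g x y).add (dstar_summable g y z))
  rw [← mul_add]
  have := min_one_subadd (dist_nonneg (x := g n x) (y := g n y))
    (dist_nonneg (x := g n y) (y := g n z)) (dist_triangle (g n x) (g n y) (g n z))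
  have hp : (0:ℝ) ≤ (1/2:ℝ)^n := by positivity
  nlinarith [this]

private lemma dstar_eq_zero {g : ℕ → X → Y} {x y : X} (h : dstar g x y = 0) (n : ℕ) :
    dist (g n x) (g n y) = 0 := by
  have hterm := Summable.le_tsum (dstar_summable g x y) n (fun j _ => dstar_term_nonneg g x y j)
  rw [show (∑' n, (1/2 : ℝ) ^ n * min 1 (dist (g n x) (g n y))) = dstar g x y from rfl, h] at hterm
  by_contra hne
  have hd : 0 < dist (g n x) (g n y) := dist_nonneg.lt_of_ne (Ne.symm hne)
  have : 0 < (1/2 : ℝ) ^ n * min 1 (dist (g n x) (g n y)) :=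
    mul_pos (by positivity) (lt_min one_pos hd)
  linarith

private lemma dstar_continuous (g : ℕ → X → Y) (hg : ∀ n, Continuous (g n)) (b : X) :
    Continuous (fun x => dstar g x b) := by
  refine continuous_tsum (u := fun n => (1/2:ℝ)^n) (fun n => ?_) summable_geometric_two
    (fun n x => ?_)
  · exact continuous_const.mul (continuous_const.min ((hg n).dist continuous_const))
  · rw [Real.norm_eq_abs, abs_of_nonneg (dstar_term_nonneg g x b n)]
    exact dstar_term_le g x b n

private lemma dstar_continuous' (g : ℕ → X → Y) (hg : ∀ n, Continuous (g n)) (a : X) :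
    Continuous (fun x => dstar g a x) := by
  have : (fun x => dstar g a x) = fun x => dstar g x a := funext fun x => dstar_comm g a x
  rw [this]
  exact dstar_continuous g hg a

end DStar

section FragBall

variable {X Y : Type*} [TopologicalSpace X] [PseudoMetricSpace Y]

private lemma frag_ball [CompactSpace X] (g : ℕ → X → Y) (hg : ∀ n, Continuous (g n))
    (hfrag : IsFragmentedFamily (Set.range g))
    (A : Set X) (hA : A.Nonempty) (ε : ℝ) (hε : 0 < ε) :
    ∃ a₀ ∈ A, ∃ δ : ℝ, 0 < δ ∧ ∀ n : ℕ, ∀ x ∈ A, ∀ y ∈ A,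
      dstar g x a₀ < δ → dstar g y a₀ < δ → dist (g n x) (g n y) ≤ ε := by
  classical
  set 𝒞 : Set (Set X) := {B | IsClosed B ∧ ∀ a ∈ A, ∃ b ∈ B, dstar g a b = 0} with h𝒞
  have hXmem : (univ : Set X) ∈ 𝒞 :=
    ⟨isClosed_univ, fun a _ => ⟨a, mem_univ a, dstar_self g a⟩⟩
  have hchain : ∀ c ⊆ 𝒞, IsChain (· ⊆ ·) c → c.Nonempty → ∃ lb ∈ 𝒞, ∀ s ∈ c, lb ⊆ s := by
    intro c hc hchain hcne
    refine ⟨⋂₀ c, ⟨isClosed_sInter (fun B hB => (hc hB).1), ?_⟩, fun s hs => sInter_subset_of_mem hs⟩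
    intro a ha
    have hE : IsClosed {x | dstar g a x = 0} :=
      isClosed_singleton.preimage (dstar_continuous' g hg a)
    haveI : Nonempty c := hcne.to_subtype
    have hne : (⋂ B : c, ((B : Set X) ∩ {x | dstar g a x = 0})).Nonempty := by
      apply IsCompact.nonempty_iInter_of_directed_nonempty_isCompact_isClosed
      · intro B1 B2
        rcases hchain.total B1.2 B2.2 with h | h
        · exact ⟨B1, subset_rfl, inter_subset_inter_left _ h⟩
        · exact ⟨B2, inter_subset_inter_left _ h, subset_rfl⟩
      · intro B
        obtain ⟨b, hb, hb0⟩ := (hc B.2).2 a ha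
        exact ⟨b, hb, hb0⟩
      · exact fun B => ((hc B.2).1.inter hE).isCompact
      · exact fun B => (hc B.2).1.inter hE
    obtain ⟨b, hb⟩ := hne
    refine ⟨b, ?_, ?_⟩
    · intro B hB
      exact (mem_iInter.mp hb ⟨B, hB⟩).1
    · obtain ⟨B0, hB0⟩ := hcne
      exact (mem_iInter.mp hb ⟨B0, hB0⟩).2
  obtain ⟨B, hBsub, hBmin⟩ := zorn_superset_nonempty 𝒞 hchain univ hXmem
  have hB𝒞 : B ∈ 𝒞 := hBmin.1
  have hBclosed : IsClosed B := hB𝒞.1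
  have hBne : B.Nonempty := by
    obtain ⟨a, ha⟩ := hA
    obtain ⟨b, hb, _⟩ := hB𝒞.2 a ha
    exact ⟨b, hb⟩
  obtain ⟨O, hO, hOB, hsmall⟩ := hfrag B hBne ε hε
  set B' := B \ O with hB'def
  have hB'closed : IsClosed B' := hBclosed.inter hO.isClosed_compl
  have hB'not : B' ∉ 𝒞 := by
    intro hmem
    have hsub : B ⊆ B' := hBmin.2 hmem diff_subset
    obtain ⟨p, hpO, hpB⟩ := hOB
    exact (hsub hpB).2 hpO
  have hex : ∃ a₀ ∈ A, ∀ b ∈ B', dstar g a₀ b ≠ 0 := by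
    by_contra h
    push_neg at h
    exact hB'not ⟨hB'closed, h⟩
  obtain ⟨a₀, ha₀, ha₀B'⟩ := hex
  obtain ⟨δ, hδpos, hδle⟩ : ∃ δ : ℝ, 0 < δ ∧ ∀ b ∈ B', δ ≤ dstar g a₀ b := by
    rcases B'.eq_empty_or_nonempty with hE | hNE
    · exact ⟨1, one_pos, by simp [hE]⟩
    · obtain ⟨b₀, hb₀, hmin⟩ := hB'closed.isCompact.exists_isMinOn hNE
        ((dstar_continuous' g hg a₀).continuousOn)
      exact ⟨dstar g a₀ b₀, (dstar_nonneg g a₀ b₀).lt_of_ne (Ne.symm (ha₀B' b₀ hb₀)),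
        fun b hb => isMinOn_iff.mp hmin b hb⟩
  have hkey : ∀ x ∈ A, dstar g x a₀ < δ → ∃ b ∈ O ∩ B, dstar g x b = 0 := by
    intro x hx hxδ
    obtain ⟨b, hbB, hb0⟩ := hB𝒞.2 x hx
    refine ⟨b, ⟨?_, hbB⟩, hb0⟩
    by_contra hbO
    have htri : dstar g a₀ b ≤ dstar g a₀ x + dstar g x b := dstar_triangle g a₀ x b
    rw [hb0] at htri
    have h2 : dstar g a₀ x < δ := by rwa [dstar_comm] at hxδ
    have := hδle b ⟨hbB, hbO⟩
    linarith
  refine ⟨a₀, ha₀, δ, hδpos, fun n x hx y hy hxδ hyδ => ?_⟩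
  obtain ⟨bx, hbx, hbx0⟩ := hkey x hx hxδ
  obtain ⟨by', hby, hby0⟩ := hkey y hy hyδ
  have h1 : dist (g n x) (g n bx) = 0 := dstar_eq_zero hbx0 n
  have h2 : dist (g n y) (g n by') = 0 := dstar_eq_zero hby0 n
  have h3 : dist (g n bx) (g n by') ≤ ε := hsmall (g n) (mem_range_self n) bx hbx by' hby
  have h4 := dist_triangle4 (g n x) (g n bx) (g n by') (g n y)
  have h5 : dist (g n by') (g n y) = 0 := by rw [dist_comm]; exact h2
  linarith

end FragBall

section Sep

variable {X Y : Type*} [TopologicalSpace X] [PseudoMetricSpace Y]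

private lemma sep_of_frag [CompactSpace X] (g : ℕ → X → Y) (hg : ∀ n, Continuous (g n))
    (hfrag : IsFragmentedFamily (Set.range g)) :
    ∃ D : Set X, D.Countable ∧ ∀ x : X, ∀ ε : ℝ, 0 < ε →
      ∃ y ∈ D, ∀ n, dist (g n x) (g n y) ≤ ε := by
  classical
  -- countable d*-dense set
  obtain ⟨Z, hZc, hZd⟩ : ∃ Z : Set X, Z.Countable ∧
      ∀ x : X, ∀ δ : ℝ, 0 < δ → ∃ z ∈ Z, dstar g x z < δ := by
    have hcov : ∀ m : ℕ, ∃ t : Finset X,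
        (univ : Set X) ⊆ ⋃ c ∈ t, {x | dstar g x c < 1/(m+1)} := by
      intro m
      apply isCompact_univ.elim_finite_subcover (fun c : X => {x | dstar g x c < 1/(m+1)})
      · exact fun c => isOpen_lt (dstar_continuous g hg c) continuous_const
      · intro x _
        refine mem_iUnion.2 ⟨x, ?_⟩
        show dstar g x x < 1/(m+1)
        rw [dstar_self]
        positivity
    choose t ht using hcov
    refine ⟨⋃ m, (t m : Set X), countable_iUnion (fun m => (t m).countable_toSet), ?_⟩
    intro x δ hδ
    obtain ⟨m, hm⟩ := exists_nat_one_div_lt hδ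
    have hx := ht m (mem_univ x)
    simp only [mem_iUnion] at hx
    obtain ⟨c, hc, hxc⟩ := hx
    exact ⟨c, mem_iUnion.2 ⟨m, hc⟩, lt_trans hxc hm⟩
  -- every separated set is countable
  have hsepcount : ∀ c : ℝ, 0 < c → ∀ S : Set X,
      (∀ s ∈ S, ∀ t ∈ S, s ≠ t → ∃ k, c < dist (g k s) (g k t)) → S.Countable := by
    intro c hc S hS
    set S₀ : Set X := {s ∈ S | ∃ z ∈ Z, ∃ q : ℚ, dstar g s z < (q:ℝ) ∧
      {x ∈ S | dstar g x z < (q:ℝ)}.Countable} with hS₀def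
    have hS₀c : S₀.Countable := by
      set I : Set (X × ℚ) := {p : X × ℚ | p.1 ∈ Z ∧
          {x ∈ S | dstar g x p.1 < (p.2:ℝ)}.Countable} with hIdef
      have hIc : I.Countable :=
        (hZc.prod countable_univ).mono (fun p hp => mem_prod.2 ⟨hp.1, mem_univ _⟩)
      have hIcnt : ∀ p ∈ I, {x ∈ S | dstar g x p.1 < (p.2:ℝ)}.Countable := fun p hp => hp.2
      have hsub : S₀ ⊆ ⋃ p ∈ I, {x ∈ S | dstar g x p.1 < (p.2 : ℝ)} := by
        rintro s ⟨hs, z, hz, q, hq, hcnt⟩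
        exact mem_iUnion₂.2 ⟨(z, q), ⟨hz, hcnt⟩, ⟨hs, hq⟩⟩
      exact Countable.mono hsub (Countable.biUnion hIc hIcnt)
    rcases (S \ S₀).eq_empty_or_nonempty with hT | hT
    · exact Countable.mono (diff_eq_empty.mp hT) hS₀c
    · exfalso
      obtain ⟨a₀, ha₀T, δ, hδ, hsmall⟩ := frag_ball g hg hfrag (S \ S₀) hT c hc
      have hsingle : ∀ x ∈ S \ S₀, dstar g x a₀ < δ → x = a₀ := by
        intro x hx hxδ
        by_contra hne
        obtain ⟨k, hk⟩ := hS x hx.1 a₀ ha₀T.1 hne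
        have := hsmall k x hx a₀ ha₀T hxδ (by rw [dstar_self]; exact hδ)
        linarith
      obtain ⟨z, hz, hzδ⟩ := hZd a₀ (δ/4) (by linarith)
      obtain ⟨q, hq1, hq2⟩ := exists_rat_btwn (show δ/4 < δ/2 by linarith)
      have hq0 : dstar g a₀ z < (q:ℝ) := lt_trans hzδ hq1
      have hcnt : {x ∈ S | dstar g x z < (q:ℝ)}.Countable := by
        refine Countable.mono ?_ (hS₀c.insert a₀)
        rintro x ⟨hxS, hxz⟩
        by_cases hx₀ : x ∈ S₀
        · exact mem_insert_of_mem _ hx₀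
        · have hxa : dstar g x a₀ < δ := by
            have h1 : dstar g x a₀ ≤ dstar g x z + dstar g z a₀ := dstar_triangle g x z a₀
            have h2 : dstar g z a₀ < δ/4 := by rw [dstar_comm]; exact hzδ
            have h3 : (q:ℝ) < δ/2 := hq2
            linarith
          rw [hsingle x ⟨hxS, hx₀⟩ hxa]
          exact mem_insert _ _
      exact ha₀T.2 ⟨ha₀T.1, z, hz, q, hq0, hcnt⟩
  -- maximal separated sets
  have hmax : ∀ n : ℕ, ∃ S : Set X,
      (∀ s ∈ S, ∀ t ∈ S, s ≠ t → ∃ k, 1/((n:ℝ)+1) < dist (g k s) (g k t)) ∧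
      ∀ S', (∀ s ∈ S', ∀ t ∈ S', s ≠ t → ∃ k, 1/((n:ℝ)+1) < dist (g k s) (g k t)) →
        S ⊆ S' → S' = S := by
    intro n
    have hzorn : ∀ c ⊆ {S : Set X | ∀ s ∈ S, ∀ t ∈ S, s ≠ t →
        ∃ k, 1/((n:ℝ)+1) < dist (g k s) (g k t)}, IsChain (· ⊆ ·) c →
        ∃ ub ∈ {S : Set X | ∀ s ∈ S, ∀ t ∈ S, s ≠ t →
          ∃ k, 1/((n:ℝ)+1) < dist (g k s) (g k t)}, ∀ s ∈ c, s ⊆ ub := by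
      intro c hc hchain
      refine ⟨⋃₀ c, ?_, fun s hs => subset_sUnion_of_mem hs⟩
      rintro s ⟨B1, hB1, hs⟩ t ⟨B2, hB2, ht⟩ hne
      rcases hchain.total hB1 hB2 with h | h
      · exact hc hB2 s (h hs) t ht hne
      · exact hc hB1 s hs t (h ht) hne
    obtain ⟨S, hS⟩ := zorn_subset
      {S : Set X | ∀ s ∈ S, ∀ t ∈ S, s ≠ t → ∃ k, 1/((n:ℝ)+1) < dist (g k s) (g k t)} hzorn
    exact ⟨S, hS.1, fun S' h1 h2 => subset_antisymm (hS.2 h1 h2) h2⟩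
  choose S hSsep hSmax using hmax
  refine ⟨⋃ n, S n, countable_iUnion (fun n => hsepcount _ (by positivity) _ (hSsep n)), ?_⟩
  intro x ε hε
  obtain ⟨n, hn⟩ := exists_nat_one_div_lt hε
  by_contra hcon
  push_neg at hcon
  have hxn : x ∉ S n := by
    intro hx
    obtain ⟨k, hk⟩ := hcon x (mem_iUnion.2 ⟨n, hx⟩)
    rw [dist_self] at hk
    linarith
  have hprop : ∀ s ∈ insert x (S n), ∀ t ∈ insert x (S n), s ≠ t →
      ∃ k, 1/((n:ℝ)+1) < dist (g k s) (g k t) := by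
    intro s hs t ht hne
    rcases mem_insert_iff.mp hs with rfl | hsS
    · rcases mem_insert_iff.mp ht with rfl | htS
      · exact absurd rfl hne
      · obtain ⟨k, hk⟩ := hcon t (mem_iUnion.2 ⟨n, htS⟩)
        exact ⟨k, lt_trans hn hk⟩
    · rcases mem_insert_iff.mp ht with rfl | htS
      · obtain ⟨k, hk⟩ := hcon s (mem_iUnion.2 ⟨n, hsS⟩)
        refine ⟨k, ?_⟩
        rw [dist_comm]
        exact lt_trans hn hk
      · exact hSsep n s hsS t htS hne
  have := hSmax n (insert x (S n)) hprop (subset_insert _ _)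
  rw [← this] at hxn
  exact hxn (mem_insert _ _)

end Sep

section Tree

variable {X Y : Type*} [TopologicalSpace X] [PseudoMetricSpace Y]

private lemma cantor_not_countable : ¬ Countable (ℕ → Bool) := by
  intro h
  obtain ⟨f, hf⟩ := exists_surjective_nat (ℕ → Bool)
  obtain ⟨n, hn⟩ := hf (fun n => !(f n n))
  have := congrFun hn n
  simp at this

private noncomputable def treeC (fsel : Set X → X → Y) (xsel ysel : Set X → X) (ε : ℝ)
    (σ : ℕ → Bool) : ℕ → Set X
  | 0 => univ
  | n+1 =>
    treeC fsel xsel ysel ε σ n ∩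
      (fsel (treeC fsel xsel ysel ε σ n)) ⁻¹'
        (Metric.ball ((fsel (treeC fsel xsel ysel ε σ n))
          (if σ n then ysel (treeC fsel xsel ysel ε σ n)
           else xsel (treeC fsel xsel ysel ε σ n))) (ε/4))

private lemma treeC_congr (fsel : Set X → X → Y) (xsel ysel : Set X → X) (ε : ℝ)
    {σ τ : ℕ → Bool} :
    ∀ n, (∀ i, i < n → σ i = τ i) →
      treeC fsel xsel ysel ε σ n = treeC fsel xsel ysel ε τ n
  | 0, _ => rfl
  | n+1, h => by
    have ih := treeC_congr fsel xsel ysel ε n (fun i hi => h i (Nat.lt_succ_of_lt hi))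
    simp only [treeC, ih, h n (Nat.lt_succ_self n)]

private lemma treeC_anti (fsel : Set X → X → Y) (xsel ysel : Set X → X) (ε : ℝ)
    (σ : ℕ → Bool) {n m : ℕ} (h : n ≤ m) :
    treeC fsel xsel ysel ε σ m ⊆ treeC fsel xsel ysel ε σ n := by
  induction m with
  | zero => rw [Nat.le_zero.mp h]
  | succ m ih =>
    rcases Nat.lt_or_ge n (m+1) with h' | h'
    · exact (inter_subset_left).trans (ih (Nat.lt_succ_iff.mp h'))
    · rw [Nat.le_antisymm h h']

private lemma not_frag_witness [CompactSpace X] (F : Set (X → Y))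
    (hcont : ∀ f ∈ F, Continuous f) (h1 : ¬ IsFragmentedFamily F) :
    ∃ K ⊆ F, K.Countable ∧
      ¬ (∃ D : Set X, D.Countable ∧ ∀ x : X, ∀ ε : ℝ, 0 < ε →
        ∃ y ∈ D, ∀ f ∈ K, dist (f x) (f y) ≤ ε) := by
  classical
  simp only [IsFragmentedFamily] at h1
  push_neg at h1
  obtain ⟨A, hA, ε, hε, hbad⟩ := h1
  obtain ⟨a₀, ha₀⟩ := hA
  haveI : Nonempty X := ⟨a₀⟩
  obtain ⟨f₀, hf₀F, -⟩ := hbad univ isOpen_univ ⟨a₀, mem_univ a₀, ha₀⟩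
  haveI : Nonempty Y := ⟨f₀ a₀⟩
  have hbad' : ∀ O : Set X, ∃ (f : X → Y) (x y : X),
      (IsOpen O ∧ (O ∩ A).Nonempty) →
        f ∈ F ∧ x ∈ O ∩ A ∧ y ∈ O ∩ A ∧ ε < dist (f x) (f y) := by
    intro O
    by_cases hO : IsOpen O ∧ (O ∩ A).Nonempty
    · obtain ⟨f, hf, x, hx, y, hy, hd⟩ := hbad O hO.1 hO.2
      exact ⟨f, x, y, fun _ => ⟨hf, hx, hy, hd⟩⟩
    · exact ⟨Classical.arbitrary _, Classical.arbitrary _, Classical.arbitrary _,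
        fun h => absurd h hO⟩
  choose fsel xsel ysel hsel using hbad'
  -- the tree of open sets
  have hinv : ∀ (σ : ℕ → Bool) (n : ℕ), IsOpen (treeC fsel xsel ysel ε σ n) ∧
      (treeC fsel xsel ysel ε σ n ∩ A).Nonempty := by
    intro σ n
    induction n with
    | zero => exact ⟨isOpen_univ, ⟨a₀, mem_univ a₀, ha₀⟩⟩
    | succ n ih =>
      obtain ⟨hfF, hx, hy, hd⟩ := hsel (treeC fsel xsel ysel ε σ n) ih
      constructor
      · exact ih.1.inter ((hcont _ hfF).isOpen_preimage _ isOpen_ball)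
      · refine ⟨if σ n then ysel (treeC fsel xsel ysel ε σ n)
          else xsel (treeC fsel xsel ysel ε σ n), ?_⟩
        cases hσ : σ n
        · simp only [treeC, hσ, if_false]
          exact ⟨⟨hx.1, mem_ball_self (by linarith)⟩, hx.2⟩
        · simp only [treeC, hσ, if_true]
          exact ⟨⟨hy.1, mem_ball_self (by linarith)⟩, hy.2⟩
  set K : Set (X → Y) :=
    Set.range (fun l : List Bool =>
      fsel (treeC fsel xsel ysel ε (fun i => l.getD i false) l.length)) with hKdef
  have hKF : K ⊆ F := by
    rintro f ⟨l, rfl⟩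
    exact (hsel _ (hinv _ _)).1
  have hKc : K.Countable := countable_range _
  have hfmem : ∀ (σ : ℕ → Bool) (n : ℕ), fsel (treeC fsel xsel ysel ε σ n) ∈ K := by
    intro σ n
    refine ⟨List.ofFn (fun i : Fin n => σ i), ?_⟩
    have hlen : (List.ofFn (fun i : Fin n => σ i)).length = n := List.length_ofFn
    show fsel (treeC fsel xsel ysel ε
        (fun i => (List.ofFn (fun i : Fin n => σ i)).getD i false)
        ((List.ofFn (fun i : Fin n => σ i)).length)) = fsel (treeC fsel xsel ysel ε σ n)
    rw [hlen]
    refine congrArg fsel ?_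
    apply treeC_congr
    intro i hi
    rw [List.getD_eq_getElem _ _ (by rw [hlen]; exact hi), List.getElem_ofFn]
  -- branch points
  have hpts : ∀ (σ : ℕ → Bool) (n : ℕ), (treeC fsel xsel ysel ε σ n ∩ A).Nonempty :=
    fun σ n => (hinv σ n).2
  choose p hp using hpts
  have hcl : ∀ σ : ℕ → Bool, ∃ x : X, ∀ n, x ∈ closure (treeC fsel xsel ysel ε σ n ∩ A) := by
    intro σ
    obtain ⟨x, -, hx⟩ := isCompact_univ.exists_clusterPt (f := Filter.map (p σ) Filter.atTop)
      (le_principal_iff.2 univ_mem)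
    refine ⟨x, fun n => ?_⟩
    rw [mem_closure_iff_clusterPt]
    refine hx.mono (le_principal_iff.2 ?_)
    rw [Filter.mem_map]
    filter_upwards [Filter.eventually_ge_atTop n] with m hm
    exact ⟨treeC_anti fsel xsel ysel ε σ hm (hp σ m).1, (hp σ m).2⟩
  choose xb hxb using hcl
  -- separation between branches
  have hsep : ∀ σ τ : ℕ → Bool, σ ≠ τ → ∃ f ∈ K, ε/2 < dist (f (xb σ)) (f (xb τ)) := by
    intro σ τ hne
    have hex : ∃ k, σ k ≠ τ k := by
      by_contra h
      push_neg at h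
      exact hne (funext h)
    set k := Nat.find hex with hkdef
    have hkne : σ k ≠ τ k := Nat.find_spec hex
    have hagree : ∀ i, i < k → σ i = τ i := fun i hi => not_not.mp (Nat.find_min hex hi)
    have hCeq : treeC fsel xsel ysel ε σ k = treeC fsel xsel ysel ε τ k :=
      treeC_congr fsel xsel ysel ε k hagree
    obtain ⟨hfF, hxS, hyS, hd⟩ := hsel (treeC fsel xsel ysel ε σ k) (hinv σ k)
    have hfK : fsel (treeC fsel xsel ysel ε σ k) ∈ K := hfmem σ k
    have hfc : Continuous (fsel (treeC fsel xsel ysel ε σ k)) := hcont _ hfF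
    -- distance of a branch point to the chosen center
    have hb : ∀ (υ : ℕ → Bool), treeC fsel xsel ysel ε υ k = treeC fsel xsel ysel ε σ k →
        dist (fsel (treeC fsel xsel ysel ε σ k) (xb υ))
          (fsel (treeC fsel xsel ysel ε σ k)
            (if υ k then ysel (treeC fsel xsel ysel ε σ k)
             else xsel (treeC fsel xsel ysel ε σ k))) ≤ ε/4 := by
      intro υ hυ
      have hsub : treeC fsel xsel ysel ε υ (k+1) ∩ A ⊆
          {u | dist (fsel (treeC fsel xsel ysel ε σ k) u)
            (fsel (treeC fsel xsel ysel ε σ k)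
              (if υ k then ysel (treeC fsel xsel ysel ε σ k)
               else xsel (treeC fsel xsel ysel ε σ k))) ≤ ε/4} := by
        intro u hu
        have hu2 := hu.1.2
        rw [hυ] at hu2
        exact le_of_lt (mem_ball.mp hu2)
      have hcls : IsClosed {u | dist (fsel (treeC fsel xsel ysel ε σ k) u)
          (fsel (treeC fsel xsel ysel ε σ k)
            (if υ k then ysel (treeC fsel xsel ysel ε σ k)
             else xsel (treeC fsel xsel ysel ε σ k))) ≤ ε/4} :=
        isClosed_le (hfc.dist continuous_const) continuous_const
      exact closure_minimal hsub hcls (hxb υ (k+1))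
    have hbσ := hb σ rfl
    have hbτ := hb τ hCeq.symm
    have h4 := dist_triangle4
      (fsel (treeC fsel xsel ysel ε σ k) (xsel (treeC fsel xsel ysel ε σ k)))
      (fsel (treeC fsel xsel ysel ε σ k) (xb σ))
      (fsel (treeC fsel xsel ysel ε σ k) (xb τ))
      (fsel (treeC fsel xsel ysel ε σ k) (ysel (treeC fsel xsel ysel ε σ k)))
    refine ⟨fsel (treeC fsel xsel ysel ε σ k), hfK, ?_⟩
    cases hσk : σ k
    · have hτk : τ k = true := by
        cases hτk : τ k
        · rw [hσk, hτk] at hkne; exact absurd rfl hkne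
        · rfl
      rw [hσk, if_neg Bool.false_ne_true] at hbσ
      rw [hτk, if_pos rfl] at hbτ
      have hds : dist (fsel (treeC fsel xsel ysel ε σ k) (xsel (treeC fsel xsel ysel ε σ k)))
          (fsel (treeC fsel xsel ysel ε σ k) (xb σ)) ≤ ε/4 := by rw [dist_comm]; exact hbσ
      have hdt : dist (fsel (treeC fsel xsel ysel ε σ k) (xb τ))
          (fsel (treeC fsel xsel ysel ε σ k) (ysel (treeC fsel xsel ysel ε σ k))) ≤ ε/4 := hbτ
      linarith
    · have hτk : τ k = false := by
        cases hτk : τ k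
        · rfl
        · rw [hσk, hτk] at hkne; exact absurd rfl hkne
      rw [hσk, if_pos rfl] at hbσ
      rw [hτk, if_neg Bool.false_ne_true] at hbτ
      have h4' := dist_triangle4
        (fsel (treeC fsel xsel ysel ε σ k) (xsel (treeC fsel xsel ysel ε σ k)))
        (fsel (treeC fsel xsel ysel ε σ k) (xb τ))
        (fsel (treeC fsel xsel ysel ε σ k) (xb σ))
        (fsel (treeC fsel xsel ysel ε σ k) (ysel (treeC fsel xsel ysel ε σ k)))
      have hds : dist (fsel (treeC fsel xsel ysel ε σ k) (xsel (treeC fsel xsel ysel ε σ k)))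
          (fsel (treeC fsel xsel ysel ε σ k) (xb τ)) ≤ ε/4 := by rw [dist_comm]; exact hbτ
      have hdt : dist (fsel (treeC fsel xsel ysel ε σ k) (xb σ))
          (fsel (treeC fsel xsel ysel ε σ k) (ysel (treeC fsel xsel ysel ε σ k))) ≤ ε/4 := hbσ
      have : ε/2 < dist (fsel (treeC fsel xsel ysel ε σ k) (xb τ))
          (fsel (treeC fsel xsel ysel ε σ k) (xb σ)) := by linarith
      rw [dist_comm] at this
      exact this
  -- conclusion
  refine ⟨K, hKF, hKc, ?_⟩
  rintro ⟨D, hDc, hD⟩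
  have hchoice : ∀ σ : ℕ → Bool, ∃ y ∈ D, ∀ f ∈ K, dist (f (xb σ)) (f y) ≤ ε/5 :=
    fun σ => hD (xb σ) (ε/5) (by linarith)
  choose yb hybD hyb using hchoice
  haveI : Countable ↥D := hDc.to_subtype
  have hnotinj : ¬ Function.Injective (fun σ : ℕ → Bool => (⟨yb σ, hybD σ⟩ : D)) := by
    intro hinj
    exact cantor_not_countable hinj.countable
  obtain ⟨σ, τ, heq, hne⟩ := Function.not_injective_iff.mp hnotinj
  obtain ⟨f, hfK, hf⟩ := hsep σ τ hne
  have h1 := hyb σ f hfK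
  have h2 := hyb τ f hfK
  have hyy : yb σ = yb τ := congrArg Subtype.val heq
  rw [hyy] at h1
  have htri : dist (f (xb σ)) (f (xb τ)) ≤
      dist (f (xb σ)) (f (yb τ)) + dist (f (yb τ)) (f (xb τ)) := dist_triangle _ _ _
  have h2' : dist (f (yb τ)) (f (xb τ)) ≤ ε/5 := by rw [dist_comm]; exact h2
  linarith

end Tree

theorem stmt0 {X Y : Type*} [TopologicalSpace X] [CompactSpace X] [PseudoMetricSpace Y]
    (F : Set (X → Y)) (hcont : ∀ f ∈ F, Continuous f)
    (hbdd : ∃ C : ℝ, ∀ f ∈ F, ∀ x y : X, dist (f x) (f y) ≤ C) :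
    List.TFAE [
      -- (1) `F` is a fragmented family on `X`
      IsFragmentedFamily F,
      -- (2) every countable subfamily of `F` is a fragmented family on `X`
      ∀ K ⊆ F, K.Countable → IsFragmentedFamily K,
      -- (3) for every countable subfamily `K ⊆ F` the pseudometric space
      -- `(X, ρ_{K,d})`, with `ρ_{K,d}(x₁,x₂) = sup_{f ∈ K} d (f x₁) (f x₂)`, is separable
      ∀ K ⊆ F, K.Countable → ∃ D : Set X, D.Countable ∧
        ∀ x : X, ∀ ε : ℝ, 0 < ε → ∃ y ∈ D, ∀ f ∈ K, dist (f x) (f y) ≤ ε] := by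
  tfae_have 1 → 2 := by
    intro h1 K hKF _ A hA ε hε
    obtain ⟨O, hO, hne, hsm⟩ := h1 A hA ε hε
    exact ⟨O, hO, hne, fun f hf => hsm f (hKF hf)⟩
  tfae_have 2 → 3 := by
    intro h2 K hKF hKc
    rcases isEmpty_or_nonempty X with hX | hX
    · exact ⟨∅, countable_empty, fun x => (IsEmpty.false x).elim⟩
    rcases K.eq_empty_or_nonempty with rfl | hKne
    · refine ⟨{Classical.arbitrary X}, countable_singleton _,
        fun x ε hε => ⟨Classical.arbitrary X, mem_singleton _, fun f hf => absurd hf (notMem_empty f)⟩⟩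
    obtain ⟨g, hg⟩ := hKc.exists_eq_range hKne
    have hfrag : IsFragmentedFamily (Set.range g) := hg ▸ h2 K hKF hKc
    have hgc : ∀ n, Continuous (g n) := fun n => hcont _ (hKF (hg ▸ mem_range_self n))
    obtain ⟨D, hDc, hD⟩ := sep_of_frag g hgc hfrag
    refine ⟨D, hDc, fun x ε hε => ?_⟩
    obtain ⟨y, hy, hdy⟩ := hD x ε hε
    refine ⟨y, hy, fun f hf => ?_⟩
    rw [hg] at hf
    obtain ⟨n, rfl⟩ := hf
    exact hdy n
  tfae_have 3 → 1 := by
    intro h3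
    by_contra h1
    obtain ⟨K, hKF, hKc, hnd⟩ := not_frag_witness F hcont h1
    exact hnd (h3 K hKF hKc)
  tfae_finish
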